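/- Let q ≥ 1 and n ≥ 5, and let ℬ = {B_{i,j}^{(k)} : i, j ∈ {1,…,n}, k ∈ {1,…,q}}. For x_1, x_2, …, x_n ∈ ℬ, one has x_1 ∪ x_2 ∪ ⋯ ∪ x_n = A_n^q if and only if there exist k ∈ {1,…,q} and i ∈ {1,…,n} with {x_1,…,x_n} = {B_{i,1}^{(k)}, B_{i,2}^{(k)}, …, B_{i,n}^{(k)}}, or there exist k ∈ {1,…,q} and j ∈ {1,…,n} with {x_1,…,x_n} = {B_{1,j}^{(k)}, B_{2,j}^{(k)}, …, B_{n,j}^{(k)}}. -/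

import Mathlib

/-- The set of even derangements: fixed-point-free elements of the alternating group. -/
def evenDerangements (n : ℕ) : Set (alternatingGroup (Fin n)) :=
  {σ | ∀ i : Fin n, (σ : Equiv.Perm (Fin n)) i ≠ i}

lemma evenDerangements_inv {n : ℕ} {g : alternatingGroup (Fin n)}
    (hg : g ∈ evenDerangements n) : g⁻¹ ∈ evenDerangements n := by
  intro i hi
  apply hg i
  have h1 : ((g : Equiv.Perm (Fin n)))⁻¹ i = i := by
    simpa using hi
  conv_lhs => rw [← h1]
  simp

/-- The tensor power `AΓ_n^q` of the even derangement graph. -/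
def AGamma (n q : ℕ) : SimpleGraph (Fin q → alternatingGroup (Fin n)) where
  Adj σ τ := σ ≠ τ ∧ ∀ k, σ k * (τ k)⁻¹ ∈ evenDerangements n
  symm := by
    refine ⟨?_⟩
    rintro σ τ ⟨hne, h⟩
    refine ⟨hne.symm, fun k => ?_⟩
    have := evenDerangements_inv (h k)
    simpa [mul_inv_rev] using this
  loopless := ⟨fun σ h => h.1 rfl⟩

/-- The even derangement graph `AΓ_n`. -/
def AGammaOne (n : ℕ) : SimpleGraph (alternatingGroup (Fin n)) where
  Adj σ τ := σ ≠ τ ∧ σ * τ⁻¹ ∈ evenDerangements n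
  symm := by
    refine ⟨?_⟩
    rintro σ τ ⟨hne, h⟩
    refine ⟨hne.symm, ?_⟩
    have := evenDerangements_inv h
    simpa [mul_inv_rev] using this
  loopless := ⟨fun σ h => h.1 rfl⟩

/-- The maximum independent set candidates `B_{i,j}^{(k)}`. -/
def B (n q : ℕ) (i j : Fin n) (k : Fin q) : Set (Fin q → alternatingGroup (Fin n)) :=
  {σ | (σ k : Equiv.Perm (Fin n)) i = j}

/-- A set of vertices is independent if no two of its members are adjacent. -/
def IsIndep {V : Type*} (G : SimpleGraph V) (s : Set V) : Prop :=
  s.Pairwise fun u v => ¬ G.Adj u v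

def Bf (n q : ℕ) (i j : Fin n) (k : Fin q) : Finset (Fin q → alternatingGroup (Fin n)) :=
  Finset.univ.filter fun σ => (σ k : Equiv.Perm (Fin n)) i = j

lemma mem_Bf {n q : ℕ} {i j : Fin n} {k : Fin q} {σ : Fin q → alternatingGroup (Fin n)} :
    σ ∈ Bf n q i j k ↔ σ ∈ B n q i j k := by
  simp [Bf, B]


section Aux

variable {n q : ℕ}

lemma exists_third (hn : 3 ≤ n) (i j : Fin n) : ∃ r : Fin n, r ≠ i ∧ r ≠ j := by
  by_contra h
  push_neg at h
  have hsub : (Finset.univ : Finset (Fin n)) ⊆ {i, j} := by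
    intro r _
    simp only [Finset.mem_insert, Finset.mem_singleton]
    rcases eq_or_ne r i with h1 | h1
    · exact Or.inl h1
    · exact Or.inr (h r h1)
  have h1 := Finset.card_le_card hsub
  have h2 : ({i, j} : Finset (Fin n)).card ≤ 2 :=
    (Finset.card_insert_le _ _).trans (by simp)
  simp only [Finset.card_univ, Fintype.card_fin] at h1
  omega

lemma exists_fourth (hn : 4 ≤ n) (i j l : Fin n) : ∃ r : Fin n, r ≠ i ∧ r ≠ j ∧ r ≠ l := by
  by_contra h
  push_neg at h
  have hsub : (Finset.univ : Finset (Fin n)) ⊆ {i, j, l} := by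
    intro r _
    simp only [Finset.mem_insert, Finset.mem_singleton]
    rcases eq_or_ne r i with h1 | h1
    · exact Or.inl h1
    rcases eq_or_ne r j with h2 | h2
    · exact Or.inr (Or.inl h2)
    · exact Or.inr (Or.inr (h r h1 h2))
  have h1 := Finset.card_le_card hsub
  have h2 : ({i, j, l} : Finset (Fin n)).card ≤ 3 :=
    (Finset.card_insert_le _ _).trans (by
      have := Finset.card_insert_le j ({l} : Finset (Fin n))
      simp only [Finset.card_singleton] at this ⊢
      omega)
  simp only [Finset.card_univ, Fintype.card_fin] at h1
  omega

lemma exists_alt_one (hn : 5 ≤ n) (i j : Fin n) :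
    ∃ g : alternatingGroup (Fin n), (g : Equiv.Perm (Fin n)) i = j := by
  rcases eq_or_ne i j with rfl | hij
  · exact ⟨1, rfl⟩
  obtain ⟨r, hri, hrj⟩ := exists_third (by omega) i j
  refine ⟨⟨Equiv.swap j i * Equiv.swap j r, ?_⟩, ?_⟩
  · rw [Equiv.Perm.mem_alternatingGroup, map_mul,
      Equiv.Perm.sign_swap (Ne.symm hij), Equiv.Perm.sign_swap (Ne.symm hrj)]
    norm_num
  · show (Equiv.swap j i * Equiv.swap j r) i = j
    rw [Equiv.Perm.mul_apply, Equiv.swap_apply_of_ne_of_ne hij (Ne.symm hri),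
      Equiv.swap_apply_right]

lemma exists_alt_two (hn : 5 ≤ n) {i i' j j' : Fin n} (hi : i ≠ i') (hj : j ≠ j') :
    ∃ g : alternatingGroup (Fin n),
      (g : Equiv.Perm (Fin n)) i = j ∧ (g : Equiv.Perm (Fin n)) i' = j' := by
  obtain ⟨g1, hg1⟩ := exists_alt_one hn i j
  set b := (g1 : Equiv.Perm (Fin n)) i' with hb
  have hbj : b ≠ j := by
    rw [hb, ← hg1]
    intro h
    exact hi ((g1 : Equiv.Perm (Fin n)).injective h).symm
  rcases eq_or_ne b j' with hbj' | hbj'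
  · exact ⟨g1, hg1, hbj'⟩
  obtain ⟨r, hr1, hr2, hr3⟩ := exists_fourth (by omega) j' b j
  have hsign : Equiv.swap j' b * Equiv.swap j' r ∈ alternatingGroup (Fin n) := by
    rw [Equiv.Perm.mem_alternatingGroup, map_mul,
      Equiv.Perm.sign_swap (Ne.symm hbj'), Equiv.Perm.sign_swap (Ne.symm hr1)]
    norm_num
  refine ⟨(⟨Equiv.swap j' b * Equiv.swap j' r, hsign⟩ : alternatingGroup (Fin n)) * g1, ?_, ?_⟩
  · show (Equiv.swap j' b * Equiv.swap j' r) ((g1 : Equiv.Perm (Fin n)) i) = j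
    rw [hg1, Equiv.Perm.mul_apply, Equiv.swap_apply_of_ne_of_ne hj (Ne.symm hr3),
      Equiv.swap_apply_of_ne_of_ne hj (Ne.symm hbj)]
  · show (Equiv.swap j' b * Equiv.swap j' r) ((g1 : Equiv.Perm (Fin n)) i') = j'
    rw [← hb, Equiv.Perm.mul_apply, Equiv.swap_apply_of_ne_of_ne hbj' (Ne.symm hr2),
      Equiv.swap_apply_right]

end Aux

section cards
variable {n q : ℕ}

lemma sum_card_Bf (i0 : Fin n) (k0 : Fin q) :
    ∑ j : Fin n, (Bf n q i0 j k0).card =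
      Fintype.card (Fin q → alternatingGroup (Fin n)) := by
  rw [← Finset.card_univ]
  exact (Finset.card_eq_sum_card_fiberwise
    (f := fun σ : Fin q → alternatingGroup (Fin n) => (σ k0 : Equiv.Perm (Fin n)) i0)
    (t := Finset.univ) (fun _ _ => Finset.mem_univ _)).symm ▸ rfl

open Equiv in
lemma card_Bf_eq (hn : 5 ≤ n) (i j i' j' : Fin n) (k k' : Fin q) :
    (Bf n q i j k).card = (Bf n q i' j' k').card := by
  obtain ⟨g, hg⟩ := exists_alt_one hn i' i
  obtain ⟨h, hh⟩ := exists_alt_one hn j j'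
  set F : (Fin q → alternatingGroup (Fin n)) → (Fin q → alternatingGroup (Fin n)) := fun σ m =>
    if m = k' then h * σ k * g else σ (Equiv.swap k k' m) with hF
  set G : (Fin q → alternatingGroup (Fin n)) → (Fin q → alternatingGroup (Fin n)) := fun σ m =>
    if m = k then h⁻¹ * σ k' * g⁻¹ else σ (Equiv.swap k k' m) with hG
  have hFk' : ∀ σ, F σ k' = h * σ k * g := fun σ => by simp [hF]
  have hGk : ∀ σ, G σ k = h⁻¹ * σ k' * g⁻¹ := fun σ => by simp [hG]
  refine Finset.card_bij' (fun σ _ => F σ) (fun σ _ => G σ) ?_ ?_ ?_ ?_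
  · intro σ hσ
    rw [mem_Bf] at hσ ⊢
    show ((F σ k' : alternatingGroup (Fin n)) : Equiv.Perm (Fin n)) i' = j'
    rw [hFk']
    push_cast [Subgroup.coe_mul]
    simp only [Function.comp_apply, hg]
    rw [show ((σ k : alternatingGroup (Fin n)) : Equiv.Perm (Fin n)) i = j from hσ, hh]
  · intro σ hσ
    rw [mem_Bf] at hσ ⊢
    show ((G σ k : alternatingGroup (Fin n)) : Equiv.Perm (Fin n)) i = j
    rw [hGk]
    push_cast [Subgroup.coe_mul, Subgroup.coe_inv]
    have hgi : ((g : Equiv.Perm (Fin n)))⁻¹ i = i' := by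
      rw [← hg]; simp
    have hhj : ((h : Equiv.Perm (Fin n)))⁻¹ j' = j := by
      rw [← hh]; simp
    simp only [Function.comp_apply, hgi]
    rw [show ((σ k' : alternatingGroup (Fin n)) : Equiv.Perm (Fin n)) i' = j' from hσ, hhj]
  · intro σ _
    show G (F σ) = σ
    funext m
    rcases eq_or_ne m k with rfl | hm
    · rw [hGk, hFk']
      group
    · have h1 : Equiv.swap k k' m ≠ k' := by
        intro hc
        apply hm
        have := congrArg (Equiv.swap k k') hc
        simpa using this
      show (if m = k then _ else F σ (Equiv.swap k k' m)) = σ m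
      rw [if_neg hm, hF]
      simp only [if_neg h1]
      simp
  · intro σ _
    show F (G σ) = σ
    funext m
    rcases eq_or_ne m k' with rfl | hm
    · rw [hFk', hGk]
      group
    · have h1 : Equiv.swap k k' m ≠ k := by
        intro hc
        apply hm
        have := congrArg (Equiv.swap k k') hc
        simpa using this
      show (if m = k' then _ else G σ (Equiv.swap k k' m)) = σ m
      rw [if_neg hm, hG]
      simp only [if_neg h1]
      simp

lemma B_nonempty (hn : 5 ≤ n) (i j : Fin n) (k : Fin q) : (B n q i j k).Nonempty := by
  obtain ⟨g, hg⟩ := exists_alt_one hn i j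
  exact ⟨fun _ => g, hg⟩

lemma B_inter_ne_k (hn : 5 ≤ n) (i j i' j' : Fin n) {k k' : Fin q} (hk : k ≠ k') :
    (B n q i j k ∩ B n q i' j' k').Nonempty := by
  obtain ⟨g, hg⟩ := exists_alt_one hn i j
  obtain ⟨g', hg'⟩ := exists_alt_one hn i' j'
  refine ⟨fun m => if m = k then g else g', ?_, ?_⟩
  · show (((if k = k then g else g' : alternatingGroup (Fin n)) : alternatingGroup (Fin n)) : Equiv.Perm (Fin n)) i = j
    rw [if_pos rfl]; exact hg
  · show (((if k' = k then g else g' : alternatingGroup (Fin n)) : alternatingGroup (Fin n)) : Equiv.Perm (Fin n)) i' = j'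
    rw [if_neg (Ne.symm hk)]; exact hg'

end cards


/-- `n` members of `ℬ` cover `A_n^q` iff they form a row `ℛ_i^{(k)}` or a
column `𝒞_j^{(k)}`. -/
theorem B_cover_iff_row_or_column (n q : ℕ) (hq : 1 ≤ q) (hn : 5 ≤ n)
    (x : Fin n → Set (Fin q → alternatingGroup (Fin n)))
    (hx : ∀ m : Fin n, ∃ (i j : Fin n) (k : Fin q), x m = B n q i j k) :
    (⋃ m, x m) = Set.univ ↔
      (∃ (k : Fin q) (i : Fin n), Set.range x = Set.range fun j => B n q i j k) ∨
      (∃ (k : Fin q) (j : Fin n), Set.range x = Set.range fun i => B n q i j k) := by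
  classical
  have hn' : 0 < n := by omega
  constructor
  · intro hcov
    choose i j k hxm using hx
    let m0 : Fin n := ⟨0, hn'⟩
    have hsum1 : ∑ m : Fin n, (Bf n q (i m) (j m) (k m)).card
        = ∑ σ : Fin q → alternatingGroup (Fin n),
            (Finset.univ.filter fun m => (σ (k m) : Equiv.Perm (Fin n)) (i m) = j m).card := by
      simp only [Bf, Finset.card_filter]
      rw [Finset.sum_comm]
    have hsum2 : ∑ m : Fin n, (Bf n q (i m) (j m) (k m)).card
        = Fintype.card (Fin q → alternatingGroup (Fin n)) := by
      rw [← sum_card_Bf (i m0) (k m0)]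
      exact Finset.sum_congr rfl fun m _ => card_Bf_eq hn _ _ _ _ _ _
    have hle : ∀ σ ∈ (Finset.univ : Finset (Fin q → alternatingGroup (Fin n))),
        1 ≤ (Finset.univ.filter fun m => (σ (k m) : Equiv.Perm (Fin n)) (i m) = j m).card := by
      intro σ _
      have hσu : σ ∈ ⋃ m, x m := by rw [hcov]; trivial
      obtain ⟨m, hm⟩ := Set.mem_iUnion.mp hσu
      rw [hxm m] at hm
      exact Finset.card_pos.mpr ⟨m, Finset.mem_filter.mpr ⟨Finset.mem_univ _, hm⟩⟩
    have hone : ∀ σ : Fin q → alternatingGroup (Fin n),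
        (Finset.univ.filter fun m => (σ (k m) : Equiv.Perm (Fin n)) (i m) = j m).card = 1 := by
      have hsum : (∑ σ : Fin q → alternatingGroup (Fin n), (1 : ℕ))
          = ∑ σ : Fin q → alternatingGroup (Fin n),
              (Finset.univ.filter fun m => (σ (k m) : Equiv.Perm (Fin n)) (i m) = j m).card := by
        rw [← hsum1, hsum2]
        simp
      intro σ
      exact ((Finset.sum_eq_sum_iff_of_le hle).mp hsum σ (Finset.mem_univ _)).symm
    have huniq : ∀ (σ : Fin q → alternatingGroup (Fin n)) (a b : Fin n),
        σ ∈ x a → σ ∈ x b → a = b := by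
      intro σ a b ha hb
      rw [hxm a] at ha
      rw [hxm b] at hb
      obtain ⟨e, he⟩ := Finset.card_eq_one.mp (hone σ)
      have ha' : a ∈ Finset.univ.filter
          fun m => (σ (k m) : Equiv.Perm (Fin n)) (i m) = j m :=
        Finset.mem_filter.mpr ⟨Finset.mem_univ _, ha⟩
      have hb' : b ∈ Finset.univ.filter
          fun m => (σ (k m) : Equiv.Perm (Fin n)) (i m) = j m :=
        Finset.mem_filter.mpr ⟨Finset.mem_univ _, hb⟩
      rw [he, Finset.mem_singleton] at ha' hb'
      exact ha'.trans hb'.symm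
    have hk : ∀ m, k m = k m0 := by
      intro m
      by_contra hkm
      obtain ⟨σ, hσ1, hσ2⟩ := B_inter_ne_k hn (i m) (j m) (i m0) (j m0) hkm
      have := huniq σ m m0 (by rw [hxm m]; exact hσ1) (by rw [hxm m0]; exact hσ2)
      rw [this] at hkm
      exact hkm rfl
    have hrel : ∀ a b, a ≠ b → (i a = i b ∧ j a ≠ j b) ∨ (i a ≠ i b ∧ j a = j b) := by
      intro a b hab
      rcases eq_or_ne (i a) (i b) with hi1 | hi1 <;> rcases eq_or_ne (j a) (j b) with hj1 | hj1
      · exfalso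
        obtain ⟨σ, hσ⟩ := B_nonempty hn (i a) (j a) (k a)
        have hkab : k a = k b := (hk a).trans (hk b).symm
        exact hab (huniq σ a b (by rw [hxm a]; exact hσ)
          (by rw [hxm b, ← hi1, ← hj1, ← hkab]; exact hσ))
      · exact Or.inl ⟨hi1, hj1⟩
      · exact Or.inr ⟨hi1, hj1⟩
      · exfalso
        obtain ⟨g, hg1, hg2⟩ := exists_alt_two hn hi1 hj1
        have h1 : (fun _ => g : Fin q → alternatingGroup (Fin n)) ∈ x a := by
          rw [hxm a]; exact hg1
        have h2 : (fun _ => g : Fin q → alternatingGroup (Fin n)) ∈ x b := by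
          rw [hxm b]; exact hg2
        exact hab (huniq _ a b h1 h2)
    by_cases hic : ∀ a b, i a = i b
    · left
      refine ⟨k m0, i m0, ?_⟩
      have hjinj : Function.Injective j := by
        intro a b hab2
        by_contra hne
        rcases hrel a b hne with ⟨_, hj2⟩ | ⟨hi2, _⟩
        · exact hj2 hab2
        · exact hi2 (hic a b)
      have hjsurj := Finite.injective_iff_surjective.mp hjinj
      ext S
      simp only [Set.mem_range]
      constructor
      · rintro ⟨m, rfl⟩
        exact ⟨j m, by rw [hxm m, hic m m0, hk m]⟩
      · rintro ⟨j', rfl⟩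
        obtain ⟨m, hm⟩ := hjsurj j'
        exact ⟨m, by rw [hxm m, hic m m0, hk m, hm]⟩
    · right
      push_neg at hic
      obtain ⟨a, b, hiab⟩ := hic
      have hab : a ≠ b := fun h => hiab (by rw [h])
      have hjab : j a = j b := by
        rcases hrel a b hab with ⟨hi2, _⟩ | ⟨_, hj2⟩
        · exact absurd hi2 hiab
        · exact hj2
      have hjc : ∀ m, j m = j a := by
        intro m
        rcases eq_or_ne m a with rfl | hma
        · rfl
        rcases eq_or_ne m b with rfl | hmb
        · exact hjab.symm
        rcases hrel m a hma with ⟨hi2, hj2⟩ | ⟨_, hj2⟩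
        · rcases hrel m b hmb with ⟨hi3, _⟩ | ⟨_, hj3⟩
          · exact absurd (hi2.symm.trans hi3) hiab
          · exact hj3.trans hjab.symm
        · exact hj2
      refine ⟨k m0, j a, ?_⟩
      have hiinj : Function.Injective i := by
        intro c d hcd
        by_contra hne
        rcases hrel c d hne with ⟨_, hj2⟩ | ⟨hi2, _⟩
        · exact hj2 ((hjc c).trans (hjc d).symm)
        · exact hi2 hcd
      have hisurj := Finite.injective_iff_surjective.mp hiinj
      ext S
      simp only [Set.mem_range]
      constructor
      · rintro ⟨m, rfl⟩
        exact ⟨i m, by rw [hxm m, hjc m, hk m]⟩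
      · rintro ⟨i', rfl⟩
        obtain ⟨m, hm⟩ := hisurj i'
        exact ⟨m, by rw [hxm m, hjc m, hk m, hm]⟩
  · rintro (⟨k0, i0, hr⟩ | ⟨k0, j0, hr⟩)
    · apply Set.eq_univ_of_forall
      intro σ
      have hmemr : B n q i0 ((σ k0 : Equiv.Perm (Fin n)) i0) k0 ∈ Set.range x := by
        rw [hr]
        exact ⟨_, rfl⟩
      obtain ⟨m, hm⟩ := hmemr
      refine Set.mem_iUnion.mpr ⟨m, ?_⟩
      rw [hm]
      exact rfl
    · apply Set.eq_univ_of_forall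
      intro σ
      have hmemB : σ ∈ B n q ((((σ k0)⁻¹ : alternatingGroup (Fin n)) : Equiv.Perm (Fin n)) j0) j0 k0 := by
        show (σ k0 : Equiv.Perm (Fin n)) _ = j0
        simp
      have hmemr : B n q ((((σ k0)⁻¹ : alternatingGroup (Fin n)) : Equiv.Perm (Fin n)) j0) j0 k0
          ∈ Set.range x := by
        rw [hr]
        exact ⟨_, rfl⟩
      obtain ⟨m, hm⟩ := hmemr
      exact Set.mem_iUnion.mpr ⟨m, hm ▸ hmemB⟩
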